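/- For A ∈ F^{n×n}, the following are equivalent: (1) A is cyclic (some vector v satisfies ⟨v⟩_A = F^n); (2) A is similar to the companion matrix of its characteristic polynomial; (3) χ_A = μ_A; (4) deg(μ_A) = n. -/

import Mathlib

open Polynomial Matrix

/-- `p` is the minimal polynomial of the vector `v` with respect to the matrix `A`
(row vectors, right multiplication). -/
def IsVecMinpoly {F : Type*} [Field F] {n : ℕ} (A : Matrix (Fin n) (Fin n) F)
    (v : Fin n → F) (p : F[X]) : Prop :=
  p.Monic ∧ v ᵥ* (aeval A p) = 0 ∧ ∀ q : F[X], v ᵥ* (aeval A q) = 0 → p ∣ q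

/-- The `A`-span `⟨v⟩_A = {v·p(A) : p ∈ F[X]}` of a vector `v`. -/
def aspan {F : Type*} [Field F] {n : ℕ} (A : Matrix (Fin n) (Fin n) F)
    (v : Fin n → F) : Submodule F (Fin n → F) :=
  Submodule.span F {w | ∃ p : F[X], w = v ᵥ* (aeval A p)}

/-- The companion matrix of a polynomial `p` (for the right-multiplication convention):
identity superdiagonal block, last row the negated coefficients of `p`. -/
def companion {F : Type*} [Field F] (n : ℕ) (p : F[X]) : Matrix (Fin n) (Fin n) F :=
  Matrix.of fun i j => if (i : ℕ) = n - 1 then -p.coeff j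
    else if (i : ℕ) + 1 = (j : ℕ) then 1 else 0

section Aux

variable {F : Type*} [Field F] {n : ℕ}

/-- right multiplication of a fixed row vector, as a linear map in the matrix. -/
private def vecMulRight (v : Fin n → F) : Matrix (Fin n) (Fin n) F →ₗ[F] (Fin n → F) where
  toFun M := v ᵥ* M
  map_add' M N := Matrix.vecMul_add M N v
  map_smul' c M := by
    ext j
    simp [Matrix.vecMul, dotProduct, Finset.mul_sum, mul_left_comm]

variable (A : Matrix (Fin n) (Fin n) F)

private lemma vecMul_aeval_mul (v : Fin n → F) (p q : F[X]) :
    v ᵥ* aeval A (p * q) = (v ᵥ* aeval A p) ᵥ* aeval A q := by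
  rw [_root_.map_mul, ← Matrix.vecMul_vecMul]

private lemma exists_isVecMinpoly (v : Fin n → F) : ∃ p, IsVecMinpoly A v p := by
  classical
  let I : Ideal F[X] :=
    { carrier := {q | v ᵥ* aeval A q = 0}
      add_mem' := fun {a b} ha hb => by
        simp only [Set.mem_setOf_eq] at *
        rw [map_add, Matrix.vecMul_add, ha, hb, add_zero]
      zero_mem' := by simp [Set.mem_setOf_eq]
      smul_mem' := fun c {q} hq => by
        simp only [Set.mem_setOf_eq, smul_eq_mul] at *
        rw [mul_comm, vecMul_aeval_mul, hq, Matrix.zero_vecMul] }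
  have hmem : ∀ q : F[X], q ∈ I ↔ v ᵥ* aeval A q = 0 := fun q => Iff.rfl
  have hμ : (minpoly F A) ∈ I := by
    rw [hmem, minpoly.aeval, Matrix.vecMul_zero]
  have hg := Submodule.IsPrincipal.generator_mem I
  set g := Submodule.IsPrincipal.generator I with hgdef
  have hgI : ∀ q : F[X], q ∈ I ↔ g ∣ q := by
    intro q
    rw [← Submodule.IsPrincipal.span_singleton_generator I]
    exact Ideal.mem_span_singleton
  have hg0 : g ≠ 0 := by
    intro h
    have := (hgI _).1 hμ
    rw [h] at this
    exact minpoly.ne_zero (Matrix.isIntegral A) (zero_dvd_iff.mp this)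
  refine ⟨g * C g.leadingCoeff⁻¹, Polynomial.monic_mul_leadingCoeff_inv hg0, ?_, ?_⟩
  · have : g * C g.leadingCoeff⁻¹ ∈ I := Ideal.mul_mem_right _ I hg
    exact (hmem _).1 this
  · intro q hq
    have : g ∣ q := (hgI q).1 hq
    have hu : IsUnit (C g.leadingCoeff⁻¹ : F[X]) :=
      Polynomial.isUnit_C.mpr (isUnit_iff_ne_zero.mpr
        (inv_ne_zero (Polynomial.leadingCoeff_ne_zero.mpr hg0)))
    exact (hu.mul_right_dvd).2 this

private lemma isVecMinpoly_dvd_minpoly {v : Fin n → F} {p : F[X]}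
    (h : IsVecMinpoly A v p) : p ∣ minpoly F A :=
  h.2.2 _ (by rw [minpoly.aeval, Matrix.vecMul_zero])

/-- Expansion of `v ᵥ* aeval A r` in the "powers of `A`" generators. -/
private lemma expand (v : Fin n → F) (r : F[X]) (m : ℕ) (hr : r.degree < (m : ℕ)) :
    v ᵥ* aeval A r = ∑ k : Fin m, r.coeff (k : ℕ) • (v ᵥ* aeval A ((X : F[X]) ^ (k : ℕ))) := by
  by_cases hr0 : r = 0
  · simp [hr0]
  have hn : r.natDegree < m := (Polynomial.natDegree_lt_iff_degree_lt hr0).2 hr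
  conv_lhs => rw [Polynomial.as_sum_range' r m hn]
  have : ∀ q : F[X], v ᵥ* aeval A q = vecMulRight v (aeval A q) := fun _ => rfl
  rw [this, map_sum (aeval A), map_sum (vecMulRight v)]
  rw [Finset.sum_range fun i => vecMulRight v (aeval A ((monomial i) (r.coeff i)))]
  refine Finset.sum_congr rfl fun k _ => ?_
  rw [Polynomial.aeval_monomial, ← Algebra.smul_def, _root_.map_smul, this, aeval_X_pow]

private lemma monic_dvd_dvd_eq {p q : F[X]} (hp : p.Monic) (hq : q.Monic)
    (h1 : p ∣ q) (h2 : q ∣ p) : p = q :=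
  Polynomial.eq_of_monic_of_associated hp hq (associated_of_dvd_dvd h1 h2)

private lemma aspan_le_span (v : Fin n → F) {g : F[X]} (hg : g.Monic) (hgA : aeval A g = 0)
    {m : ℕ} (hdeg : g.natDegree ≤ m) :
    aspan A v ≤ Submodule.span F
      (Set.range fun k : Fin m => v ᵥ* aeval A ((X : F[X]) ^ (k : ℕ))) := by
  rw [aspan, Submodule.span_le]
  rintro w ⟨p, rfl⟩
  by_cases hg1 : g = 1
  · have h0 : (1 : Matrix (Fin n) (Fin n) F) = 0 := by
      simpa [hg1] using hgA
    have : aeval A p = 0 := by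
      calc aeval A p = aeval A p * 1 := (mul_one _).symm
      _ = 0 := by rw [h0, mul_zero]
    rw [this, Matrix.vecMul_zero]
    exact Submodule.zero_mem _
  · have hmod : v ᵥ* aeval A p = v ᵥ* aeval A (p %ₘ g) := by
      conv_lhs => rw [← Polynomial.modByMonic_add_div p g]
      rw [map_add, Matrix.vecMul_add, _root_.map_mul, hgA, zero_mul,
        Matrix.vecMul_zero, add_zero]
    have hlt : (p %ₘ g).degree < (m : ℕ) := by
      refine lt_of_lt_of_le (Polynomial.degree_modByMonic_lt p hg) ?_
      rw [Polynomial.degree_eq_natDegree hg.ne_zero]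
      exact_mod_cast hdeg
    rw [hmod, expand A v _ m hlt]
    exact Submodule.sum_mem _ fun k _ =>
      Submodule.smul_mem _ _ (Submodule.subset_span ⟨k, rfl⟩)

private lemma minpoly_natDegree_le : (minpoly F A).natDegree ≤ n := by
  have h := Polynomial.natDegree_le_of_dvd (Matrix.minpoly_dvd_charpoly A)
    (Matrix.charpoly_monic A).ne_zero
  rwa [Matrix.charpoly_natDegree_eq_dim, Fintype.card_fin] at h

private lemma cyclic_to_deg (h : ∃ v, aspan A v = ⊤) : (minpoly F A).natDegree = n := by
  obtain ⟨v, hv⟩ := h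
  refine le_antisymm (minpoly_natDegree_le A) ?_
  set m := (minpoly F A).natDegree with hm
  have hle : (⊤ : Submodule F (Fin n → F)) ≤ Submodule.span F
      (Set.range fun k : Fin m => v ᵥ* aeval A ((X : F[X]) ^ (k : ℕ))) := by
    rw [← hv]
    exact aspan_le_span A v (minpoly.monic (Matrix.isIntegral A)) (minpoly.aeval F A) le_rfl
  have htop : Submodule.span F
      (Set.range fun k : Fin m => v ᵥ* aeval A ((X : F[X]) ^ (k : ℕ))) = ⊤ :=
    top_le_iff.mp hle
  have h1 : Module.finrank F (Fin n → F) ≤ m := by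
    classical
    calc Module.finrank F (Fin n → F)
        = Module.finrank F (⊤ : Submodule F (Fin n → F)) := (finrank_top F _).symm
      _ = Module.finrank F (Submodule.span F
            (Set.range fun k : Fin m => v ᵥ* aeval A ((X : F[X]) ^ (k : ℕ)))) := by rw [htop]
      _ ≤ (Set.range fun k : Fin m => v ᵥ* aeval A ((X : F[X]) ^ (k : ℕ))).toFinset.card :=
            finrank_span_le_card _
      _ ≤ m := by
            have := Finset.card_image_le (s := (Finset.univ : Finset (Fin m)))
              (f := fun k : Fin m => v ᵥ* aeval A ((X : F[X]) ^ (k : ℕ)))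
            simpa [Set.toFinset_range] using this
  rwa [Module.finrank_pi, Fintype.card_fin] at h1

private lemma pair : ∀ (N : ℕ) (u w : Fin n → F) (a b : F[X]),
    IsVecMinpoly A u a → IsVecMinpoly A w b → a.natDegree + b.natDegree = N →
    ∃ v c, IsVecMinpoly A v c ∧ a ∣ c ∧ b ∣ c := by
  intro N
  induction N using Nat.strong_induction_on with
  | _ N ih =>
  intro u w a b ha hb hN
  by_cases hco : IsCoprime a b
  · obtain ⟨c, hc⟩ := exists_isVecMinpoly A (u + w)
    refine ⟨u + w, c, hc, ?_, ?_⟩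
    · have hsum : (u + w) ᵥ* aeval A (c * b) = u ᵥ* aeval A (c * b) + w ᵥ* aeval A (c * b) :=
        Matrix.add_vecMul _ _ _
      have h2 : (u + w) ᵥ* aeval A (c * b) = 0 := by
        rw [vecMul_aeval_mul, hc.2.1, Matrix.zero_vecMul]
      have h3 : w ᵥ* aeval A (c * b) = 0 := by
        rw [mul_comm, vecMul_aeval_mul, hb.2.1, Matrix.zero_vecMul]
      have h4 : u ᵥ* aeval A (c * b) = 0 := by
        rw [h2, h3, add_zero] at hsum; exact hsum.symm
      exact hco.dvd_of_dvd_mul_right (ha.2.2 _ h4)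
    · have hsum : (u + w) ᵥ* aeval A (c * a) = u ᵥ* aeval A (c * a) + w ᵥ* aeval A (c * a) :=
        Matrix.add_vecMul _ _ _
      have h2 : (u + w) ᵥ* aeval A (c * a) = 0 := by
        rw [vecMul_aeval_mul, hc.2.1, Matrix.zero_vecMul]
      have h3 : u ᵥ* aeval A (c * a) = 0 := by
        rw [mul_comm, vecMul_aeval_mul, ha.2.1, Matrix.zero_vecMul]
      have h4 : w ᵥ* aeval A (c * a) = 0 := by
        rw [h3, h2, zero_add] at hsum
        exact hsum.symm
      exact hco.symm.dvd_of_dvd_mul_right (hb.2.2 _ h4)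
  · classical
    have ha0 : a ≠ 0 := ha.1.ne_zero
    have hb0 : b ≠ 0 := hb.1.ne_zero
    have hgcd : ¬IsUnit (EuclideanDomain.gcd a b) := fun h =>
      hco (EuclideanDomain.gcd_isUnit_iff.mp h)
    have hgcd0 : EuclideanDomain.gcd a b ≠ 0 := fun h =>
      ha0 (EuclideanDomain.gcd_eq_zero_iff.mp h).1
    obtain ⟨p, hpirr, hpg⟩ := WfDvdMonoid.exists_irreducible_factor hgcd hgcd0
    have hp : Prime p := hpirr.prime
    have hpa : p ∣ a := hpg.trans (EuclideanDomain.gcd_dvd_left a b)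
    have hpb : p ∣ b := hpg.trans (EuclideanDomain.gcd_dvd_right a b)
    obtain ⟨a', haeq, hpa'⟩ :=
      (FiniteMultiplicity.of_not_isUnit hpirr.not_isUnit ha0).exists_eq_pow_mul_and_not_dvd
    obtain ⟨b', hbeq, hpb'⟩ :=
      (FiniteMultiplicity.of_not_isUnit hpirr.not_isUnit hb0).exists_eq_pow_mul_and_not_dvd
    set k := multiplicity p a with hkdef
    set l := multiplicity p b with hldef
    have key : ∀ (u w : Fin n → F) (a b : F[X]) (k : ℕ) (a' : F[X]),
        IsVecMinpoly A u a → IsVecMinpoly A w b → a = p ^ k * a' → ¬ p ∣ a' →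
        p ^ k ∣ b → p ∣ a → a.natDegree + b.natDegree = N →
        ∃ v c, IsVecMinpoly A v c ∧ a ∣ c ∧ b ∣ c := by
      intro u w a b k a' ha hb haeq hpa' hpkb hpa hN
      obtain ⟨c', hc'⟩ := exists_isVecMinpoly A (u ᵥ* aeval A (p ^ k))
      have h1 : c' ∣ a' := hc'.2.2 _ (by rw [← vecMul_aeval_mul, ← haeq, ha.2.1])
      have h2 : a' ∣ c' := by
        have h3 : u ᵥ* aeval A (p ^ k * c') = 0 := by
          rw [vecMul_aeval_mul]; exact hc'.2.1
        have h4 : a ∣ p ^ k * c' := ha.2.2 _ h3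
        rw [haeq] at h4
        exact (mul_dvd_mul_iff_left (pow_ne_zero k hp.ne_zero)).mp h4
      have ha'0 : a' ≠ 0 := fun h => ha.1.ne_zero (by rw [haeq, h, mul_zero])
      have hk1 : 1 ≤ k := by
        rcases Nat.eq_zero_or_pos k with hk | hk
        · exfalso
          apply hpa'
          rwa [haeq, hk, pow_zero, one_mul] at hpa
        · exact hk
      have hdegp : 1 ≤ p.natDegree := hpirr.natDegree_pos
      have hdc : c'.natDegree = a'.natDegree :=
        le_antisymm (Polynomial.natDegree_le_of_dvd h1 ha'0)
          (Polynomial.natDegree_le_of_dvd h2 hc'.1.ne_zero)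
      have hdega : a.natDegree = k * p.natDegree + a'.natDegree := by
        rw [haeq, Polynomial.natDegree_mul (pow_ne_zero _ hp.ne_zero) ha'0,
          Polynomial.natDegree_pow, mul_comm]
      have hdlt : c'.natDegree + b.natDegree < N := by
        have h5 : 1 ≤ k * p.natDegree := Nat.one_le_iff_ne_zero.mpr (by positivity)
        omega
      obtain ⟨v, c, hvc, hcc, hbc⟩ := ih _ hdlt (u ᵥ* aeval A (p ^ k)) w c' b hc' hb rfl
      refine ⟨v, c, hvc, ?_, hbc⟩
      rw [haeq]
      exact ((hp.coprime_iff_not_dvd.mpr hpa').pow_left).mul_dvd (hpkb.trans hbc)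
        (h2.trans hcc)
    rcases le_total k l with hkl | hlk
    · exact key u w a b k a' ha hb haeq hpa'
        (by rw [hbeq]; exact dvd_mul_of_dvd_left (pow_dvd_pow p hkl) b') hpa hN
    · obtain ⟨v, c, h1, h2, h3⟩ := key w u b a l b' hb ha hbeq hpb'
        (by rw [haeq]; exact dvd_mul_of_dvd_left (pow_dvd_pow p hlk) a') hpb (by omega)
      exact ⟨v, c, h1, h3, h2⟩

private lemma exists_isVecMinpoly_minpoly : ∃ v, IsVecMinpoly A v (minpoly F A) := by
  classical
  choose c hc using fun i : Fin n => exists_isVecMinpoly A (Pi.single i (1 : F))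
  have main : ∀ s : Finset (Fin n), ∃ v d, IsVecMinpoly A v d ∧ ∀ i ∈ s, c i ∣ d := by
    intro s
    induction s using Finset.induction_on with
    | empty =>
      exact ⟨0, 1, ⟨monic_one, by rw [Matrix.zero_vecMul], fun q _ => one_dvd q⟩, by simp⟩
    | @insert a s hnot ihs =>
      obtain ⟨v, d, hvd, hall⟩ := ihs
      obtain ⟨v', d', h1, h2, h3⟩ := pair A _ v (Pi.single a 1) d (c a) hvd (hc a) rfl
      refine ⟨v', d', h1, fun i hi => ?_⟩
      rcases Finset.mem_insert.mp hi with h | h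
      · rw [h]; exact h3
      · exact (hall i h).trans h2
  obtain ⟨v, d, hvd, hall⟩ := main Finset.univ
  have hAd : aeval A d = 0 := by
    ext i j
    have hrow : Pi.single i (1 : F) ᵥ* aeval A d = 0 := by
      obtain ⟨t, ht⟩ := hall i (Finset.mem_univ i)
      rw [ht, vecMul_aeval_mul, (hc i).2.1, Matrix.zero_vecMul]
    have := congrFun hrow j
    simpa [Matrix.single_vecMul] using this
  have h1 : minpoly F A ∣ d := minpoly.dvd F A hAd
  have h2 : d ∣ minpoly F A := isVecMinpoly_dvd_minpoly A hvd
  have hdm : d = minpoly F A :=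
    monic_dvd_dvd_eq hvd.1 (minpoly.monic (Matrix.isIntegral A)) h2 h1
  exact ⟨v, hdm ▸ hvd⟩

private lemma deg_to_cyclic (h : (minpoly F A).natDegree = n) : ∃ v, aspan A v = ⊤ := by
  classical
  obtain ⟨v, hv⟩ := exists_isVecMinpoly_minpoly A
  set f : Fin n → (Fin n → F) := fun k => v ᵥ* aeval A ((X : F[X]) ^ (k : ℕ)) with hf
  have hli : LinearIndependent F f := by
    rw [Fintype.linearIndependent_iff]
    intro g hg i
    set r : F[X] := ∑ k : Fin n, C (g k) * (X : F[X]) ^ (k : ℕ) with hr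
    have hdeg : r.degree < (n : ℕ) := by
      apply lt_of_le_of_lt (Polynomial.degree_sum_le _ _)
      rw [Finset.sup_lt_iff (by exact_mod_cast WithBot.bot_lt_coe n)]
      intro k _
      exact lt_of_le_of_lt (Polynomial.degree_C_mul_X_pow_le _ _) (by exact_mod_cast k.2)
    have hcoeff : ∀ k : Fin n, r.coeff (k : ℕ) = g k := by
      intro k
      rw [hr, Polynomial.finset_sum_coeff]
      have heach : ∀ k' : Fin n, (C (g k') * (X : F[X]) ^ (k' : ℕ)).coeff (k : ℕ)
          = if k' = k then g k' else 0 := by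
        intro k'
        rw [Polynomial.coeff_C_mul, Polynomial.coeff_X_pow]
        by_cases hkk : k' = k
        · subst hkk; simp
        · rw [if_neg fun hc => hkk (Fin.ext hc.symm), mul_zero, if_neg hkk]
      rw [Finset.sum_congr rfl fun k' _ => heach k', Finset.sum_ite_eq' Finset.univ k g]
      simp
    have h0 : v ᵥ* aeval A r = 0 := by
      rw [expand A v r n hdeg, ← hg]
      exact Finset.sum_congr rfl fun k _ => by rw [hcoeff k]
    have hr0 : r = 0 := Polynomial.eq_zero_of_dvd_of_degree_lt (hv.2.2 r h0)
      (by rw [Polynomial.degree_eq_natDegree (minpoly.ne_zero (Matrix.isIntegral A)), h]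
          exact hdeg)
    rw [← hcoeff i, hr0, Polynomial.coeff_zero]
  have hspan : Submodule.span F (Set.range f) = ⊤ :=
    hli.span_eq_top_of_card_eq_finrank' (by rw [Module.finrank_pi, Fintype.card_fin])
  refine ⟨v, top_le_iff.mp ?_⟩
  rw [← hspan, Submodule.span_le]
  rintro w ⟨k, rfl⟩
  exact Submodule.subset_span ⟨(X : F[X]) ^ (k : ℕ), rfl⟩

private lemma coeff_finsum (g : Fin n → F) (k : Fin n) :
    (∑ k' : Fin n, Polynomial.C (g k') * (X : F[X]) ^ (k' : ℕ)).coeff (k : ℕ) = g k := by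
  rw [Polynomial.finset_sum_coeff]
  have heach : ∀ k' : Fin n, (Polynomial.C (g k') * (X : F[X]) ^ (k' : ℕ)).coeff (k : ℕ)
      = if k' = k then g k' else 0 := by
    intro k'
    rw [Polynomial.coeff_C_mul, Polynomial.coeff_X_pow]
    by_cases hkk : k' = k
    · subst hkk; simp
    · rw [if_neg fun hc => hkk (Fin.ext hc.symm), mul_zero, if_neg hkk]
  rw [Finset.sum_congr rfl fun k' _ => heach k', Finset.sum_ite_eq' Finset.univ k g]
  simp

private lemma degree_finsum_lt (g : Fin n → F) :
    (∑ k' : Fin n, Polynomial.C (g k') * (X : F[X]) ^ (k' : ℕ)).degree < (n : ℕ) := by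
  apply lt_of_le_of_lt (Polynomial.degree_sum_le _ _)
  rw [Finset.sup_lt_iff (by exact_mod_cast WithBot.bot_lt_coe n)]
  intro k _
  exact lt_of_le_of_lt (Polynomial.degree_C_mul_X_pow_le _ _) (by exact_mod_cast k.2)

private lemma monic_dvd_deg_eq {p q : F[X]} (hp : p.Monic) (hq : q.Monic) (h1 : p ∣ q)
    (h2 : q.natDegree ≤ p.natDegree) : p = q := by
  obtain ⟨c, hc⟩ := h1
  have hc0 : c ≠ 0 := by rintro rfl; exact hq.ne_zero (by rw [hc, mul_zero])
  have hdeg : q.natDegree = p.natDegree + c.natDegree := by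
    rw [hc, Polynomial.natDegree_mul hp.ne_zero hc0]
  have hcd : c.natDegree = 0 := by omega
  have hcu : c = Polynomial.C (c.coeff 0) := Polynomial.eq_C_of_natDegree_eq_zero hcd
  have hone : c.coeff 0 = 1 := by
    have hlq := hq.leadingCoeff
    rw [hc, Polynomial.leadingCoeff_mul, hp.leadingCoeff, one_mul] at hlq
    rwa [hcu, Polynomial.leadingCoeff_C] at hlq
  rw [hc, hcu, hone, Polynomial.C_1, mul_one]

private lemma aeval_units_conj (U : (Matrix (Fin n) (Fin n) F)ˣ) (B : Matrix (Fin n) (Fin n) F)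
    (p : F[X]) :
    aeval ((↑U⁻¹ : Matrix (Fin n) (Fin n) F) * B * (↑U : Matrix (Fin n) (Fin n) F)) p
      = (↑U⁻¹ : Matrix (Fin n) (Fin n) F) * aeval B p * (↑U : Matrix (Fin n) (Fin n) F) := by
  induction p using Polynomial.induction_on' with
  | add p q hp hq =>
    simp only [map_add]
    rw [hp, hq, mul_add, add_mul]
  | monomial d c =>
    have hpow : ∀ d : ℕ, ((↑U⁻¹ : Matrix (Fin n) (Fin n) F) * B * (↑U : Matrix (Fin n) (Fin n) F)) ^ d
        = (↑U⁻¹ : Matrix (Fin n) (Fin n) F) * B ^ d * (↑U : Matrix (Fin n) (Fin n) F) := by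
      intro d
      induction d with
      | zero => rw [pow_zero, pow_zero, mul_one, Units.inv_mul]
      | succ d ihd =>
        rw [pow_succ, pow_succ, ihd]
        simp only [mul_assoc]
        rw [Units.mul_inv_cancel_left]
    rw [Polynomial.aeval_monomial, Polynomial.aeval_monomial, hpow, ← Algebra.smul_def,
      ← Algebra.smul_def, mul_smul_comm, smul_mul_assoc]

private lemma e0_vecMul_pow {p : F[X]} (hn : 0 < n) :
    ∀ (k : ℕ) (hk : k < n), (Pi.single (⟨0, hn⟩ : Fin n) (1 : F)) ᵥ* (companion n p) ^ k
      = Pi.single (⟨k, hk⟩ : Fin n) 1 := by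
  intro k
  induction k with
  | zero => intro hk; rw [pow_zero, Matrix.vecMul_one]
  | succ k ihk =>
    intro hk
    have hk' : k < n := lt_trans (Nat.lt_succ_self k) hk
    rw [pow_succ, ← Matrix.vecMul_vecMul, ihk hk', Matrix.single_vecMul]
    funext j
    have hne : k ≠ n - 1 := by omega
    simp only [Matrix.row, Pi.smul_apply, smul_eq_mul, companion, Matrix.of_apply, one_mul, Pi.single_apply, if_neg hne]
    by_cases hj : k + 1 = (j : ℕ)
    · rw [if_pos hj, if_pos (Fin.ext hj.symm)]
    · rw [if_neg hj, if_neg fun hc => hj (by rw [hc])]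

private lemma cyclic_to_companion (h : ∃ v, aspan A v = ⊤) :
    ∃ C : GL (Fin n) F, (↑(C⁻¹) : Matrix (Fin n) (Fin n) F) * A
      * (↑C : Matrix (Fin n) (Fin n) F) = companion n A.charpoly := by
  classical
  rcases Nat.eq_zero_or_pos n with hn | hn
  · subst hn
    exact ⟨1, Subsingleton.elim _ _⟩
  obtain ⟨v, hv⟩ := h
  set f : Fin n → (Fin n → F) := fun k => v ᵥ* aeval A ((X : F[X]) ^ (k : ℕ)) with hf
  have hspan : Submodule.span F (Set.range f) = ⊤ := by
    apply top_le_iff.mp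
    rw [← hv]
    exact aspan_le_span A v (Matrix.charpoly_monic A) (Matrix.aeval_self_charpoly A)
      (by rw [Matrix.charpoly_natDegree_eq_dim, Fintype.card_fin])
  have hcard : Fintype.card (Fin n) = Module.finrank F (Fin n → F) := by
    rw [Module.finrank_pi, Fintype.card_fin]
  let bas : Module.Basis (Fin n) F (Fin n → F) :=
    basisOfTopLeSpanOfCardEqFinrank f (le_of_eq hspan.symm) hcard
  have hbas : ⇑bas = f := coe_basisOfTopLeSpanOfCardEqFinrank f _ _
  set P : Matrix (Fin n) (Fin n) F := Matrix.of fun i j => f i j with hP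
  have hPt : (Pi.basisFun F (Fin n)).toMatrix ⇑bas = P.transpose := by
    ext i j
    rw [Module.Basis.toMatrix_apply, hbas, Pi.basisFun_repr, Matrix.transpose_apply]
    rfl
  have hinvt : IsUnit P.transpose := by
    have hI := Module.Basis.invertibleToMatrix (Pi.basisFun F (Fin n)) bas
    have hu : IsUnit ((Pi.basisFun F (Fin n)).toMatrix ⇑bas) := @isUnit_of_invertible _ _ _ hI
    rwa [hPt] at hu
  have hinv : IsUnit P := by
    rw [Matrix.isUnit_iff_isUnit_det] at hinvt ⊢
    rwa [Matrix.det_transpose] at hinvt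
  obtain ⟨U, hU⟩ := hinv
  have hkey : v ᵥ* aeval A ((X : F[X]) ^ n) = ∑ k : Fin n, (-(A.charpoly.coeff k)) • f k := by
    have hd : ((X : F[X]) ^ n - A.charpoly).degree < (n : ℕ) := by
      by_cases hxc : (X : F[X]) ^ n = A.charpoly
      · rw [hxc, sub_self, Polynomial.degree_zero]
        exact WithBot.bot_lt_coe n
      · have hlt := Polynomial.degree_sub_lt (p := (X : F[X]) ^ n) (q := A.charpoly)
          (by rw [Polynomial.degree_X_pow,
                Polynomial.degree_eq_natDegree (Matrix.charpoly_monic A).ne_zero,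
                Matrix.charpoly_natDegree_eq_dim, Fintype.card_fin])
          (pow_ne_zero n Polynomial.X_ne_zero)
          (by rw [Polynomial.leadingCoeff_X_pow, (Matrix.charpoly_monic A).leadingCoeff])
        rwa [Polynomial.degree_X_pow] at hlt
    have he := expand A v ((X : F[X]) ^ n - A.charpoly) n hd
    rw [map_sub, Matrix.vecMul_sub, Matrix.aeval_self_charpoly, Matrix.vecMul_zero,
      sub_zero] at he
    rw [he]
    refine Finset.sum_congr rfl fun k _ => ?_
    congr 1
    rw [Polynomial.coeff_sub, Polynomial.coeff_X_pow, if_neg (Nat.ne_of_lt k.2), zero_sub]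
  have hPA : P * A = companion n A.charpoly * P := by
    ext i j
    have hrow : (P * A) i j = (f i ᵥ* A) j := by
      simp [Matrix.mul_apply, Matrix.vecMul, dotProduct, hP]
    have hfA : f i ᵥ* A = v ᵥ* aeval A ((X : F[X]) ^ ((i : ℕ) + 1)) := by
      rw [hf]
      dsimp only
      rw [pow_succ, _root_.map_mul, aeval_X, ← Matrix.vecMul_vecMul]
    by_cases hi : (i : ℕ) = n - 1
    · have hin : (i : ℕ) + 1 = n := by omega
      have hR : (companion n A.charpoly * P) i j
          = ∑ k : Fin n, (-(A.charpoly.coeff k)) * f k j := by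
        rw [Matrix.mul_apply]
        refine Finset.sum_congr rfl fun k _ => ?_
        simp [companion, hi, hP]
      rw [hrow, hfA, hin, hR, hkey]
      simp
    · have hi1 : (i : ℕ) + 1 < n := by
        have := i.2
        omega
      have hR : (companion n A.charpoly * P) i j = f ⟨(i : ℕ) + 1, hi1⟩ j := by
        rw [Matrix.mul_apply]
        rw [Finset.sum_eq_single (⟨(i : ℕ) + 1, hi1⟩ : Fin n)]
        · simp [companion, hi, hP]
        · intro k _ hk
          have hik : (i : ℕ) + 1 ≠ (k : ℕ) :=
            fun hc => hk ((Fin.ext hc.symm : k = ⟨(i : ℕ) + 1, hi1⟩))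
          simp [companion, hi, hik]
        · intro hmem
          exact absurd (Finset.mem_univ _) hmem
      rw [hrow, hfA, hR]
  refine ⟨U⁻¹, ?_⟩
  show (↑(U⁻¹⁻¹) : Matrix (Fin n) (Fin n) F) * A * (↑(U⁻¹) : Matrix (Fin n) (Fin n) F)
      = companion n A.charpoly
  rw [inv_inv, hU, hPA, mul_assoc, ← hU, Units.mul_inv, mul_one]

private lemma companion_to_cyclic
    (h : ∃ C : GL (Fin n) F,
      (↑(C⁻¹) : Matrix (Fin n) (Fin n) F) * A
        * (↑C : Matrix (Fin n) (Fin n) F) = companion n A.charpoly) :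
    ∃ v, aspan A v = ⊤ := by
  classical
  rcases Nat.eq_zero_or_pos n with hn | hn
  · subst hn
    refine ⟨0, Submodule.eq_top_iff'.mpr fun x => ?_⟩
    rw [Subsingleton.elim x 0]
    exact Submodule.zero_mem _
  obtain ⟨U0, hU0⟩ := h
  have hex : ∃ U : (Matrix (Fin n) (Fin n) F)ˣ,
      (↑U⁻¹ : Matrix (Fin n) (Fin n) F) * A
        * (↑U : Matrix (Fin n) (Fin n) F) = companion n A.charpoly := ⟨U0, hU0⟩
  obtain ⟨U, hU⟩ := hex
  set M := companion n A.charpoly with hM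
  set e0 : Fin n → F := Pi.single (⟨0, hn⟩ : Fin n) 1 with he0
  refine ⟨e0 ᵥ* (↑(U⁻¹) : Matrix (Fin n) (Fin n) F), ?_⟩
  rw [aspan, eq_top_iff]
  intro w _
  apply Submodule.subset_span
  set w' := w ᵥ* (↑U : Matrix (Fin n) (Fin n) F) with hw'
  set p : F[X] := ∑ k' : Fin n, Polynomial.C (w' k') * (X : F[X]) ^ (k' : ℕ) with hp
  have hconj : aeval M p = (↑U⁻¹ : Matrix (Fin n) (Fin n) F) * aeval A p
      * (↑U : Matrix (Fin n) (Fin n) F) := by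
    rw [← hU]
    exact aeval_units_conj U A p
  have hswap : (↑U⁻¹ : Matrix (Fin n) (Fin n) F) * aeval A p
      = aeval M p * (↑U⁻¹ : Matrix (Fin n) (Fin n) F) := by
    rw [hconj, mul_assoc, Units.mul_inv, mul_one]
  have hMp : e0 ᵥ* aeval M p = w' := by
    rw [expand M e0 p n (degree_finsum_lt w')]
    have heach : ∀ k : Fin n, p.coeff (k : ℕ) • (e0 ᵥ* aeval M ((X : F[X]) ^ (k : ℕ)))
        = w' k • (Pi.single k 1 : Fin n → F) := by
      intro k
      rw [hp, coeff_finsum, aeval_X_pow, he0, e0_vecMul_pow hn (k : ℕ) k.2, Fin.eta]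
    rw [Finset.sum_congr rfl fun k _ => heach k]
    funext j
    simp [Pi.single_apply, Finset.sum_ite_eq]
  have hfinal : w = (e0 ᵥ* (↑(U⁻¹) : Matrix (Fin n) (Fin n) F)) ᵥ* aeval A p :=
    calc w = w ᵥ* (1 : Matrix (Fin n) (Fin n) F) := by rw [Matrix.vecMul_one]
    _ = w ᵥ* ((↑U : Matrix (Fin n) (Fin n) F) * ↑U⁻¹) := by rw [Units.mul_inv]
    _ = w' ᵥ* (↑U⁻¹ : Matrix (Fin n) (Fin n) F) := by rw [← Matrix.vecMul_vecMul, ← hw']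
    _ = (e0 ᵥ* aeval M p) ᵥ* (↑U⁻¹ : Matrix (Fin n) (Fin n) F) := by rw [hMp]
    _ = e0 ᵥ* (aeval M p * (↑U⁻¹ : Matrix (Fin n) (Fin n) F)) := by
        rw [Matrix.vecMul_vecMul]
    _ = e0 ᵥ* ((↑U⁻¹ : Matrix (Fin n) (Fin n) F) * aeval A p) := by rw [hswap]
    _ = (e0 ᵥ* (↑(U⁻¹) : Matrix (Fin n) (Fin n) F)) ᵥ* aeval A p := by
        rw [Matrix.vecMul_vecMul]
  exact ⟨p, hfinal⟩

end Aux

/-- Characterisations of cyclic matrices: cyclicity, similarity to the companion matrix of the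
characteristic polynomial, `χ_A = μ_A`, and `deg μ_A = n` are all equivalent. -/
theorem stmt12 {F : Type*} [Field F] {n : ℕ} (A : Matrix (Fin n) (Fin n) F) :
    ((∃ v : Fin n → F, aspan A v = ⊤) ↔
      ∃ C : GL (Fin n) F,
        (↑(C⁻¹) : Matrix (Fin n) (Fin n) F) * A * (↑C : Matrix (Fin n) (Fin n) F) = companion n (Matrix.charpoly A)) ∧
    ((∃ v : Fin n → F, aspan A v = ⊤) ↔ Matrix.charpoly A = minpoly F A) ∧
    ((∃ v : Fin n → F, aspan A v = ⊤) ↔ (minpoly F A).natDegree = n) := by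
  refine ⟨⟨fun h => cyclic_to_companion A h, fun h => companion_to_cyclic A h⟩,
    ⟨fun h => ?_, fun h => ?_⟩, ⟨fun h => cyclic_to_deg A h, fun h => deg_to_cyclic A h⟩⟩
  · have hd := cyclic_to_deg A h
    exact (monic_dvd_deg_eq (minpoly.monic (Matrix.isIntegral A)) (Matrix.charpoly_monic A)
      (Matrix.minpoly_dvd_charpoly A)
      (by rw [Matrix.charpoly_natDegree_eq_dim, Fintype.card_fin, hd])).symm
  · apply deg_to_cyclic A
    rw [← h, Matrix.charpoly_natDegree_eq_dim, Fintype.card_fin]
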